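/- Let γ ∈ ℝ^{n-1} satisfy σ_j(γ) > 0 for j = 1,...,n-k (i.e. γ ∈ Γ_{n-k}) and suppose σ_{n-k+1}(γ) ≥ σ_{n-k}(γ). Then σ_j(γ) ≥ σ_{j-1}(γ) for every j = 1,...,n-k+1; in particular σ_1(γ) ≥ 1. -/

import Mathlib

open Finset

/-- The `k`-th elementary symmetric polynomial of a vector (with `σ_0 = 1`). -/
noncomputable def esym (n k : ℕ) (x : Fin n → ℝ) : ℝ :=
  ∑ t ∈ Finset.powersetCard k (Finset.univ : Finset (Fin n)), ∏ i ∈ t, x i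

open Polynomial

lemma esym_zero_eq (m : ℕ) (γ : Fin m → ℝ) : esym m 0 γ = 1 := by
  simp [esym]

lemma esym_eq_zero_of_lt (m r : ℕ) (hr : m < r) (γ : Fin m → ℝ) : esym m r γ = 0 := by
  unfold esym
  rw [Finset.powersetCard_eq_empty.2 (by simpa using hr), Finset.sum_empty]

lemma splits_derivative {p : ℝ[X]} (hp : p.Splits) :
    (Polynomial.derivative p).Splits := by
  rcases eq_or_ne (Polynomial.derivative p) 0 with h | h
  · rw [h]; exact Splits.zero
  · rw [splits_iff_card_roots] at hp ⊢
    have h1 := p.card_roots_le_derivative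
    have h2 := (Polynomial.derivative p).card_roots'
    have h3 := p.natDegree_derivative_le
    omega

lemma splits_iterate_derivative (k : ℕ) {p : ℝ[X]} (hp : p.Splits) :
    (Polynomial.derivative^[k] p).Splits := by
  induction k with
  | zero => simpa
  | succ k ih => rw [Function.iterate_succ_apply']; exact splits_derivative ih

lemma splits_reverse {p : ℝ[X]} (hp : p.Splits) :
    p.reverse.Splits := by
  rcases eq_or_ne p 0 with rfl | h
  · simpa using (Splits.zero : (0:ℝ[X]).Splits)
  · have hprod := hp.eq_prod_roots
    rw [hprod, reverse_mul_of_domain]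
    apply Splits.mul
    · exact Splits.of_natDegree_le_one ((reverse_natDegree_le _).trans (by simp))
    · generalize p.roots = s
      induction s using Multiset.induction_on with
      | empty =>
          exact Splits.of_natDegree_le_one ((reverse_natDegree_le _).trans (by simp))
      | cons a s ih =>
          rw [Multiset.map_cons, Multiset.prod_cons, reverse_mul_of_domain]
          exact Splits.mul (Splits.of_natDegree_le_one
            ((reverse_natDegree_le _).trans (by simp))) ih

lemma discrim_nonneg_of_splits {p : ℝ[X]} (h2 : p.natDegree ≤ 2)
    (hs : p.Splits) : 4 * (p.coeff 2 * p.coeff 0) ≤ p.coeff 1 ^ 2 := by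
  by_cases hc : p.coeff 2 = 0
  · rw [hc]; nlinarith [sq_nonneg (p.coeff 1)]
  · have hd : p.natDegree = 2 := le_antisymm h2 (le_natDegree_of_ne_zero hc)
    have hp0 : p ≠ 0 := fun hz => hc (by simp [hz])
    rw [splits_iff_card_roots, hd] at hs
    obtain ⟨r, hr⟩ := Multiset.card_pos_iff_exists_mem.mp (by rw [hs]; norm_num)
    have hroot : p.eval r = 0 := (mem_roots hp0).mp hr
    have he : p.coeff 0 + p.coeff 1 * r + p.coeff 2 * r ^ 2 = 0 := by
      rw [← hroot, eval_eq_sum_range, hd]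
      simp [Finset.sum_range_succ]
    have he4 : 4 * p.coeff 2 * (p.coeff 0 + p.coeff 1 * r + p.coeff 2 * r ^ 2) = 0 := by
      rw [he]; ring
    nlinarith [sq_nonneg (2 * p.coeff 2 * r + p.coeff 1), he4]

lemma two_mul_choose_two (n : ℕ) : 2 * Nat.choose (n + 2) 2 = (n + 2) * (n + 1) := by
  induction n with
  | zero => decide
  | succ n ih =>
      have hcc : (n + 3).choose 2 = (n + 2).choose 1 + (n + 2).choose 2 :=
        Nat.choose_succ_succ _ _
      rw [Nat.choose_one_right] at hcc
      rw [show n + 1 + 2 = n + 3 from rfl, hcc, Nat.mul_add, ih]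
      ring

lemma descFact_one (n : ℕ) : (1 + n).descFactorial n = (n + 1) * n.factorial := by
  rw [Nat.descFactorial_eq_factorial_mul_choose, show 1 + n = n + 1 from by omega,
    Nat.choose_succ_self_right]
  ring

lemma descFact_two (n : ℕ) : 2 * ((2 + n).descFactorial n) = (n + 2) * (n + 1) * n.factorial := by
  rw [Nat.descFactorial_eq_factorial_mul_choose, show 2 + n = n + 2 from by omega]
  have h : (n + 2).choose n = (n + 2).choose 2 := by
    rw [← Nat.choose_symm (by omega : 2 ≤ n + 2), show n + 2 - 2 = n from by omega]
  rw [h, show 2 * (n.factorial * (n+2).choose 2) = n.factorial * (2 * (n+2).choose 2) from by ring,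
    two_mul_choose_two]
  ring

set_option maxHeartbeats 1600000 in
lemma newton_weak (m j : ℕ) (hj : 1 ≤ j) (γ : Fin m → ℝ) :
    esym m (j - 1) γ * esym m (j + 1) γ ≤ esym m j γ ^ 2 := by
  obtain ⟨i, rfl⟩ : ∃ i, j = i + 1 := ⟨j - 1, by omega⟩
  rw [show i + 1 - 1 = i from rfl]
  by_cases hjm : i + 2 ≤ m
  swap
  · rw [esym_eq_zero_of_lt m (i + 1 + 1) (by omega)]
    nlinarith [sq_nonneg (esym m (i + 1) γ)]
  obtain ⟨t, rfl⟩ : ∃ t, m = i + 2 + t := ⟨m - (i + 2), by omega⟩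
  set P : ℝ[X] := ∏ a : Fin (i + 2 + t), (X + C (γ a)) with hP
  have hPm : P.Monic := monic_prod_of_monic _ _ fun a _ => monic_X_add_C _
  have hPdeg : P.natDegree = i + 2 + t := by
    rw [hP, natDegree_prod _ _ fun a _ => (monic_X_add_C (γ a)).ne_zero]
    simp
  have hPco : ∀ r, r ≤ i + 2 + t → P.coeff r = esym (i + 2 + t) (i + 2 + t - r) γ := by
    intro r hr
    rw [hP, Finset.prod_X_add_C_coeff _ _ (by simpa using hr)]
    simp [esym, Finset.card_univ]
  have hPs : P.Splits :=
    Splits.prod fun a _ => Splits.of_natDegree_le_one (by simp)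
  set Q : ℝ[X] := Polynomial.derivative^[t] P with hQ
  have hQco : ∀ r, Q.coeff r = ((r + t).descFactorial t : ℝ) * P.coeff (r + t) := by
    intro r; rw [hQ, Polynomial.coeff_iterate_derivative]; simp [nsmul_eq_mul]
  have hQtop : Q.coeff (i + 2) ≠ 0 := by
    rw [hQco (i + 2), show i + 2 + t = P.natDegree from hPdeg.symm, hPm.coeff_natDegree]
    have hd0 : (P.natDegree).descFactorial t ≠ 0 := by
      rw [Ne, Nat.descFactorial_eq_zero_iff_lt]; omega
    simp [hd0]
  have hQdeg : Q.natDegree = i + 2 := by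
    refine le_antisymm ?_ (le_natDegree_of_ne_zero hQtop)
    have h1 := Polynomial.natDegree_iterate_derivative P t
    rw [← hQ] at h1
    omega
  have hQs : Q.Splits := splits_iterate_derivative t hPs
  set S : ℝ[X] := Polynomial.derivative^[i] Q.reverse with hS
  have hSs : S.Splits := splits_iterate_derivative i (splits_reverse hQs)
  have hSdeg : S.natDegree ≤ 2 := by
    have h1 := Polynomial.natDegree_iterate_derivative Q.reverse i
    rw [← hS] at h1
    have h2 := Q.reverse_natDegree_le
    omega
  have hRco : ∀ r, r ≤ i + 2 → Q.reverse.coeff r = Q.coeff (i + 2 - r) := by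
    intro r hr
    rw [Polynomial.coeff_reverse, hQdeg, revAt_le hr]
  have hSco : ∀ r, S.coeff r = ((r + i).descFactorial i : ℝ) * Q.reverse.coeff (r + i) := by
    intro r; rw [hS, Polynomial.coeff_iterate_derivative]; simp [nsmul_eq_mul]
  -- the three coefficients of S
  have hS0 : S.coeff 0 = (i.descFactorial i : ℝ) * ((2 + t).descFactorial t : ℝ) *
      esym (i + 2 + t) i γ := by
    rw [hSco 0, show (0 : ℕ) + i = i from by omega, hRco i (by omega),
      show i + 2 - i = 2 from by omega, hQco 2, hPco (2 + t) (by omega),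
      show i + 2 + t - (2 + t) = i from by omega]
    ring
  have hS1 : S.coeff 1 = ((1 + i).descFactorial i : ℝ) * ((1 + t).descFactorial t : ℝ) *
      esym (i + 2 + t) (i + 1) γ := by
    rw [hSco 1, hRco (1 + i) (by omega), show i + 2 - (1 + i) = 1 from by omega, hQco 1,
      hPco (1 + t) (by omega), show i + 2 + t - (1 + t) = i + 1 from by omega]
    ring
  have hS2 : S.coeff 2 = ((2 + i).descFactorial i : ℝ) * (t.descFactorial t : ℝ) *
      esym (i + 2 + t) (i + 2) γ := by
    rw [hSco 2, hRco (2 + i) (by omega), show i + 2 - (2 + i) = 0 from by omega, hQco 0,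
      hPco (0 + t) (by omega), show i + 2 + t - (0 + t) = i + 2 from by omega,
      show (0 : ℕ) + t = t from by omega]
    ring
  have hdisc := discrim_nonneg_of_splits hSdeg hSs
  rw [hS0, hS1, hS2] at hdisc
  -- the constants
  have c0 : (i.descFactorial i : ℝ) = i.factorial := by rw [Nat.descFactorial_self]
  have ct0 : (t.descFactorial t : ℝ) = t.factorial := by rw [Nat.descFactorial_self]
  have c1 : ((1 + i).descFactorial i : ℝ) = ((i : ℝ) + 1) * i.factorial := by
    rw [descFact_one]; push_cast; ring
  have ct1 : ((1 + t).descFactorial t : ℝ) = ((t : ℝ) + 1) * t.factorial := by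
    rw [descFact_one]; push_cast; ring
  have c2 : 2 * ((2 + i).descFactorial i : ℝ) = ((i : ℝ) + 2) * ((i : ℝ) + 1) * i.factorial := by
    exact_mod_cast congrArg (fun x : ℕ => (x : ℝ)) (descFact_two i)
  have ct2 : 2 * ((2 + t).descFactorial t : ℝ) = ((t : ℝ) + 2) * ((t : ℝ) + 1) * t.factorial := by
    exact_mod_cast congrArg (fun x : ℕ => (x : ℝ)) (descFact_two t)
  set a := esym (i + 2 + t) i γ
  set b := esym (i + 2 + t) (i + 1) γ
  set c := esym (i + 2 + t) (i + 2) γ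
  by_cases hac : a * c ≤ 0
  · nlinarith [sq_nonneg b]
  push_neg at hac
  have hifa : (0 : ℝ) < i.factorial := by exact_mod_cast i.factorial_pos
  have htfa : (0 : ℝ) < t.factorial := by exact_mod_cast t.factorial_pos
  have hi0 : (0 : ℝ) ≤ i := Nat.cast_nonneg i
  have ht0 : (0 : ℝ) ≤ t := Nat.cast_nonneg t
  -- constant comparison: ((i+1)(t+1) i! t!)^2 ≤ ((i+2)(i+1) i! t!)((t+2)(t+1) i! t!)
  have hconst : (((1 + i).descFactorial i : ℝ) * ((1 + t).descFactorial t))^2 ≤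
      4 * (((2 + i).descFactorial i : ℝ) * (t.descFactorial t)) *
        ((i.descFactorial i : ℝ) * ((2 + t).descFactorial t)) := by
    have e4 : 4 * (((2 + i).descFactorial i : ℝ) * (t.descFactorial t)) *
        ((i.descFactorial i : ℝ) * ((2 + t).descFactorial t)) =
        (2 * ((2 + i).descFactorial i : ℝ)) * (2 * ((2 + t).descFactorial t : ℝ)) *
          ((i.factorial : ℝ) * t.factorial) := by
      rw [c0, ct0]; ring
    rw [e4, c2, ct2, c1, ct1]
    have base : ((i : ℝ) + 1) * ((t : ℝ) + 1) ≤ ((i : ℝ) + 2) * ((t : ℝ) + 2) := by nlinarith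
    have hint := mul_le_mul_of_nonneg_left base
      (by positivity : (0 : ℝ) ≤ (((i : ℝ) + 1) * ((t : ℝ) + 1)) *
        ((i.factorial : ℝ) * t.factorial) ^ 2)
    ring_nf at hint ⊢
    linarith [hint]
  have hA1 : (0 : ℝ) < ((1 + i).descFactorial i : ℝ) * ((1 + t).descFactorial t) := by
    rw [c1, ct1]; positivity
  have key : (((1 + i).descFactorial i : ℝ) * ((1 + t).descFactorial t))^2 * (a * c) ≤
      (((1 + i).descFactorial i : ℝ) * ((1 + t).descFactorial t))^2 * b^2 := by
    have k1 := mul_le_mul_of_nonneg_right hconst hac.le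
    calc (((1 + i).descFactorial i : ℝ) * ((1 + t).descFactorial t))^2 * (a * c)
        ≤ (4 * (((2 + i).descFactorial i : ℝ) * (t.descFactorial t)) *
            ((i.descFactorial i : ℝ) * ((2 + t).descFactorial t))) * (a * c) := k1
      _ = 4 * (((2 + i).descFactorial i : ℝ) * (t.descFactorial t : ℝ) * c *
            ((i.descFactorial i : ℝ) * ((2 + t).descFactorial t : ℝ) * a)) := by ring
      _ ≤ (((1 + i).descFactorial i : ℝ) * ((1 + t).descFactorial t : ℝ) * b)^2 := hdisc
      _ = (((1 + i).descFactorial i : ℝ) * ((1 + t).descFactorial t))^2 * b^2 := by ring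
  exact le_of_mul_le_mul_left key (pow_pos hA1 2)

/-- If `γ ∈ ℝ^{n-1}` lies in `Γ_{n-k}` and `σ_{n-k+1}(γ) ≥ σ_{n-k}(γ)`, then
`σ_j(γ) ≥ σ_{j-1}(γ)` for every `j = 1, …, n-k+1`; in particular `σ_1(γ) ≥ 1`. -/
theorem esym_monotone_of_gammaCone (n k : ℕ) (hk : k ≤ n - 1) (γ : Fin (n - 1) → ℝ)
    (hΓ : ∀ j, 1 ≤ j → j ≤ n - k → 0 < esym (n - 1) j γ)
    (h : esym (n - 1) (n - k) γ ≤ esym (n - 1) (n - k + 1) γ) :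
    (∀ j, 1 ≤ j → j ≤ n - k + 1 → esym (n - 1) (j - 1) γ ≤ esym (n - 1) j γ) ∧
      1 ≤ esym (n - 1) 1 γ := by
  obtain ⟨K, hK⟩ : ∃ K, n - k = K := ⟨n - k, rfl⟩
  rw [hK] at hΓ h ⊢
  have aux : ∀ i : ℕ, i < K → esym (n - 1) (K - i - 1) γ ≤ esym (n - 1) (K - i) γ := by
    intro i
    induction i with
    | zero =>
        intro h0
        have hKpos := hΓ K h0 le_rfl
        have hnewton := newton_weak (n - 1) K h0 γ
        have hnn : 0 ≤ esym (n - 1) (K - 1) γ := by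
          rcases Nat.lt_or_ge 1 K with hgt | hle
          · exact (hΓ (K - 1) (by omega) (by omega)).le
          · rw [show K - 1 = 0 from by omega, esym_zero_eq]; norm_num
        simp only [Nat.sub_zero]
        nlinarith [hnewton, h, hKpos, hnn]
    | succ i ih =>
        intro hiK
        have h1 : esym (n - 1) (K - i - 1) γ ≤ esym (n - 1) (K - i) γ := ih (by omega)
        have hpos : 0 < esym (n - 1) (K - i - 1) γ := hΓ _ (by omega) (by omega)
        have hnn : 0 ≤ esym (n - 1) (K - i - 1 - 1) γ := by
          rcases Nat.lt_or_ge 1 (K - i - 1) with hgt | hle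
          · exact (hΓ _ (by omega) (by omega)).le
          · rw [show K - i - 1 - 1 = 0 from by omega, esym_zero_eq]; norm_num
        have hnewton := newton_weak (n - 1) (K - i - 1) (by omega) γ
        rw [show K - i - 1 + 1 = K - i from by omega] at hnewton
        rw [show K - (i + 1) - 1 = K - i - 1 - 1 from by omega,
          show K - (i + 1) = K - i - 1 from by omega]
        nlinarith [hnewton, h1, hpos, hnn]
  have main : ∀ j, 1 ≤ j → j ≤ K + 1 → esym (n - 1) (j - 1) γ ≤ esym (n - 1) j γ := by
    intro j h1 h2
    rcases Nat.lt_or_ge j (K + 1) with hlt | hge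
    · have haux := aux (K - j) (by omega)
      rwa [show K - (K - j) - 1 = j - 1 from by omega,
        show K - (K - j) = j from by omega] at haux
    · have hj : j = K + 1 := by omega
      subst hj
      simpa using h
  refine ⟨main, ?_⟩
  have h1 := main 1 le_rfl (by omega)
  rwa [show (1 : ℕ) - 1 = 0 from rfl, esym_zero_eq] at h1
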